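/- Let K be a field of characteristic p and d ≥ 2 with p not dividing d(d−1). Suppose f ∈ K[x] is monic of degree d. Then for every nonzero a ∈ K, the polynomial f'(x)·f''(x+a) − f'(x+a)·f''(x) has degree exactly 2d−4, with leading coefficient −a·d²·(d−1). -/

import Mathlib

open Polynomial

theorem wronskian_type_degree (K : Type*) [Field K] (p : ℕ) [CharP K p]
    (d : ℕ) (hd : 2 ≤ d) (hpd : ¬ p ∣ d * (d - 1))
    (f : K[X]) (hf : f.Monic) (hdeg : f.natDegree = d) (a : K) (ha : a ≠ 0) :
    (f.derivative * ((f.derivative.derivative).comp (X + C a)) -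
        (f.derivative.comp (X + C a)) * f.derivative.derivative).degree =
      ((2 * d - 4 : ℕ) : WithBot ℕ) ∧
    (f.derivative * ((f.derivative.derivative).comp (X + C a)) -
        (f.derivative.comp (X + C a)) * f.derivative.derivative).leadingCoeff =
      -(a * (d : K) ^ 2 * ((d : K) - 1)) := by
  have hdK : (d : K) ≠ 0 := by
    intro h
    exact hpd (Dvd.dvd.mul_right ((CharP.cast_eq_zero_iff K p d).mp h) _)
  have hd1K' : ((d - 1 : ℕ) : K) ≠ 0 := by
    intro h
    exact hpd (Dvd.dvd.mul_left ((CharP.cast_eq_zero_iff K p (d - 1)).mp h) _)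
  have hcast1 : ((d - 1 : ℕ) : K) = (d : K) - 1 := by
    rw [Nat.cast_sub (by omega : 1 ≤ d)]; norm_num
  have hd1K : (d : K) - 1 ≠ 0 := hcast1 ▸ hd1K'
  set P := f.derivative with hP
  have hfd : f.coeff d = 1 := by rw [← hdeg]; exact hf.coeff_natDegree
  have hPc : P.coeff (d - 1) = (d : K) := by
    rw [hP, coeff_derivative]
    have h1 : d - 1 + 1 = d := by omega
    rw [h1, hfd, hcast1]; ring
  have hPdegle : P.natDegree ≤ d - 1 := by
    simpa [hdeg] using natDegree_derivative_le f
  have hPdeg : P.natDegree = d - 1 :=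
    le_antisymm hPdegle (le_natDegree_of_ne_zero (hPc ▸ hdK))
  set R := P.comp (X + C a) - P with hR
  have htay : P.comp (X + C a) = taylor a P := (taylor_apply a P).symm
  -- coefficient of R at d - 2
  have hRc : R.coeff (d - 2) = ((d : K) - 1) * (d : K) * a := by
    rw [hR, coeff_sub, htay, taylor_coeff]
    have hq : (hasseDeriv (d - 2) P).natDegree < 2 := by
      have := natDegree_hasseDeriv_le P (d - 2)
      omega
    rw [eval_eq_sum_range' hq]
    rw [Finset.sum_range_succ, Finset.sum_range_succ, Finset.sum_range_zero]
    rw [hasseDeriv_coeff, hasseDeriv_coeff]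
    have h1 : 0 + (d - 2) = d - 2 := by omega
    have h2 : 1 + (d - 2) = d - 1 := by omega
    rw [h1, h2, Nat.choose_self, hPc]
    have h3 : (d - 1).choose (d - 2) = d - 1 := by
      have : d - 1 - 1 = d - 2 := by omega
      rw [← this, Nat.choose_symm (by omega : 1 ≤ d - 1), Nat.choose_one_right]
    rw [h3, hcast1]
    ring
  have he : ((d : K) - 1) * (d : K) * a ≠ 0 :=
    mul_ne_zero (mul_ne_zero hd1K hdK) ha
  have hRdegle : R.natDegree ≤ d - 2 := by
    rw [natDegree_le_iff_coeff_eq_zero]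
    intro N hN
    rw [hR, coeff_sub, htay]
    rcases eq_or_lt_of_le (by omega : d - 1 ≤ N) with h | h
    · rw [← h, taylor_coeff]
      have hq : (hasseDeriv (d - 1) P).natDegree < 1 := by
        have := natDegree_hasseDeriv_le P (d - 1)
        omega
      rw [eval_eq_sum_range' hq, Finset.sum_range_succ, Finset.sum_range_zero,
        hasseDeriv_coeff]
      have h1 : 0 + (d - 1) = d - 1 := by omega
      rw [h1, Nat.choose_self]
      simp
    · rw [coeff_eq_zero_of_natDegree_lt (by rw [natDegree_taylor]; omega),
        coeff_eq_zero_of_natDegree_lt (by omega), sub_zero]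
  have hRdeg : R.natDegree = d - 2 :=
    le_antisymm hRdegle (le_natDegree_of_ne_zero (hRc ▸ he))
  -- rewrite g
  have hcompP : P.comp (X + C a) = R + P := by rw [hR]; ring
  have hgeq : P * ((derivative P).comp (X + C a)) - (P.comp (X + C a)) * derivative P
      = P * derivative R - R * derivative P := by
    have : (derivative P).comp (X + C a) = derivative (P.comp (X + C a)) := by
      rw [derivative_comp]; simp
    rw [this, hcompP, derivative_add]
    ring
  rw [hgeq]
  set g := P * derivative R - R * derivative P with hg
  rcases eq_or_lt_of_le hd with hd2 | hd3
  · -- d = 2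
    subst hd2
    have hR0 : R = C (R.coeff 0) := eq_C_of_natDegree_le_zero (by omega)
    have hP'0 : derivative P = C ((derivative P).coeff 0) := by
      apply eq_C_of_natDegree_le_zero
      have := natDegree_derivative_le P
      omega
    have hP'c : (derivative P).coeff 0 = (2 : K) := by
      rw [coeff_derivative]
      have : P.coeff 1 = ((2 : ℕ) : K) := by simpa using hPc
      rw [this]; push_cast; ring
    have hgC : g = C (-(R.coeff 0) * 2) := by
      rw [hg]
      conv_lhs => rw [hR0, hP'0]
      rw [hP'c, derivative_C, mul_zero, zero_sub, ← C_mul, ← C_neg]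
      ring_nf
    have hcoeff : -(R.coeff 0) * 2 = -(a * ((2:ℕ) : K) ^ 2 * (((2:ℕ) : K) - 1)) := by
      have h0 : R.coeff 0 = (((2:ℕ):K) - 1) * ((2:ℕ) : K) * a := by simpa using hRc
      rw [h0]; push_cast; ring
    have h2K : ((2:ℕ) : K) ≠ 0 := hdK
    have hne : -(R.coeff 0) * 2 ≠ 0 := by
      rw [hcoeff, neg_ne_zero]
      exact mul_ne_zero (mul_ne_zero ha (pow_ne_zero 2 h2K)) hd1K
    constructor
    · rw [hgC, degree_C hne]
      simp
    · rw [hgC, leadingCoeff_C, hcoeff]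
  · -- d ≥ 3
    have hR'le : (derivative R).natDegree ≤ d - 3 := by
      have := natDegree_derivative_le R; omega
    have hP'le : (derivative P).natDegree ≤ d - 2 := by
      have := natDegree_derivative_le P; omega
    have hgle : g.natDegree ≤ 2 * d - 4 := by
      refine le_trans (natDegree_sub_le _ _) (max_le ?_ ?_)
      · exact le_trans natDegree_mul_le (by omega)
      · exact le_trans natDegree_mul_le (by omega)
    have hR'c : (derivative R).coeff (d - 3) =
        ((d : K) - 1) * (d : K) * a * ((d : K) - 2) := by
      rw [coeff_derivative]
      have h1 : d - 3 + 1 = d - 2 := by omega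
      rw [h1, hRc]
      have h2 : ((d - 3 : ℕ) : K) + 1 = (d : K) - 2 := by
        rw [Nat.cast_sub (by omega : 3 ≤ d)]; push_cast; ring
      rw [h2]
    have hP'c : (derivative P).coeff (d - 2) = (d : K) * ((d : K) - 1) := by
      rw [coeff_derivative]
      have h1 : d - 2 + 1 = d - 1 := by omega
      rw [h1, hPc]
      have h2 : ((d - 2 : ℕ) : K) + 1 = (d : K) - 1 := by
        rw [Nat.cast_sub (by omega : 2 ≤ d)]; push_cast; ring
      rw [h2]
    have hgc : g.coeff (2 * d - 4) = -(a * (d : K) ^ 2 * ((d : K) - 1)) := by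
      rw [hg, coeff_sub]
      have e1 : (P * derivative R).coeff (2 * d - 4) =
          P.coeff (d - 1) * (derivative R).coeff (d - 3) := by
        have h := coeff_mul_add_eq_of_natDegree_le hPdegle hR'le
        rw [show d - 1 + (d - 3) = 2 * d - 4 by omega] at h
        exact h
      have e2 : (R * derivative P).coeff (2 * d - 4) =
          R.coeff (d - 2) * (derivative P).coeff (d - 2) := by
        have h := coeff_mul_add_eq_of_natDegree_le hRdegle hP'le
        rw [show d - 2 + (d - 2) = 2 * d - 4 by omega] at h
        exact h
      rw [e1, e2, hPc, hR'c, hRc, hP'c]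
      ring
    have hne : g.coeff (2 * d - 4) ≠ 0 := by
      rw [hgc, neg_ne_zero]
      exact mul_ne_zero (mul_ne_zero ha (pow_ne_zero 2 hdK)) hd1K
    have hgdeg : g.natDegree = 2 * d - 4 :=
      le_antisymm hgle (le_natDegree_of_ne_zero hne)
    have hg0 : g ≠ 0 := fun h => hne (by simp [h])
    constructor
    · rw [degree_eq_natDegree hg0, hgdeg]
    · rw [leadingCoeff, hgdeg, hgc]
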